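/- If x is an aperiodic Sturmian word (i.e., an aperiodic, uniformly recurrent, balanced binary word), then the abelian closure of x equals the shift orbit closure of x. -/

import Mathlib

/-- `u` is a factor of the infinite word `x`. -/
def Factor {A : Type*} (x : ℕ → A) (u : List A) : Prop :=
  ∃ i, u = (List.range u.length).map fun k => x (i + k)

/-- Abelian equivalence of finite words. -/
def AbEq {A : Type*} [DecidableEq A] (u v : List A) : Prop :=
  ∀ a, u.count a = v.count a

/-- `y` is in the abelian closure of `x`. -/
def InAbClosure {A : Type*} [DecidableEq A] (x y : ℕ → A) : Prop :=
  ∀ u, Factor y u → ∃ v, Factor x v ∧ AbEq u v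

/-- A binary word is balanced. -/
def BalancedWord (x : ℕ → Fin 2) : Prop :=
  ∀ u v, Factor x u → Factor x v → u.length = v.length →
    |(u.count 1 : ℤ) - (v.count 1 : ℤ)| ≤ 1

/-- An infinite word is uniformly recurrent. -/
def UniformlyRecurrent {A : Type*} (x : ℕ → A) : Prop :=
  ∀ u, Factor x u → ∃ N, ∀ v, Factor x v → v.length = N → u <:+: v

/-- An infinite word is eventually periodic. -/
def EventuallyPeriodic {A : Type*} (y : ℕ → A) : Prop :=
  ∃ N p : ℕ, 0 < p ∧ ∀ i, N ≤ i → y (i + p) = y i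

def win {A : Type*} (x : ℕ → A) (i n : ℕ) : List A := (List.range n).map fun k => x (i + k)

@[simp] lemma win_length {A : Type*} (x : ℕ → A) (i n : ℕ) : (win x i n).length = n := by
  simp [win]

lemma factor_win {A : Type*} (x : ℕ → A) (i n : ℕ) : Factor x (win x i n) := ⟨i, by simp [win]⟩

lemma win_append {A : Type*} (x : ℕ → A) (i a b : ℕ) :
    win x i (a+b) = win x i a ++ win x (i+a) b := by
  simp [win, List.range_add, List.map_map, Function.comp]
  intro k _
  congr 1
  omega

noncomputable section
variable (x : ℕ → Fin 2)

def cnt (i n : ℕ) : ℕ := (win x i n).count 1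

def mcnt (n : ℕ) : ℕ := sInf (Set.range fun i => cnt x i n)

lemma cnt_add (i a b : ℕ) : cnt x i (a+b) = cnt x i a + cnt x (i+a) b := by
  simp [cnt, win_append, List.count_append]

lemma mcnt_le (i n : ℕ) : mcnt x n ≤ cnt x i n := Nat.sInf_le ⟨i, rfl⟩

lemma mcnt_exists (n : ℕ) : ∃ i, cnt x i n = mcnt x n := by
  have : mcnt x n ∈ Set.range fun i => cnt x i n :=
    Nat.sInf_mem (Set.range_nonempty _)
  obtain ⟨i, hi⟩ := this
  exact ⟨i, hi⟩

variable {x}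

lemma cnt_le_cnt (hbal : BalancedWord x) (i j n : ℕ) : cnt x i n ≤ cnt x j n + 1 := by
  have := hbal (win x i n) (win x j n) (factor_win x i n) (factor_win x j n) (by simp)
  have h1 : ((win x i n).count 1 : ℤ) - ((win x j n).count 1 : ℤ) ≤ 1 := by
    have := abs_le.mp this; exact this.2
  simp only [cnt]
  omega

lemma cnt_le_mcnt (hbal : BalancedWord x) (i n : ℕ) : cnt x i n ≤ mcnt x n + 1 := by
  obtain ⟨j, hj⟩ := mcnt_exists x n
  have := cnt_le_cnt hbal i j n
  omega

lemma mcnt_superadd (a b : ℕ) : mcnt x a + mcnt x b ≤ mcnt x (a+b) := by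
  obtain ⟨i, hi⟩ := mcnt_exists x (a+b)
  rw [← hi]
  rw [cnt_add]
  exact Nat.add_le_add (mcnt_le x i a) (mcnt_le x (i+a) b)

lemma mcnt_subadd (hbal : BalancedWord x) (a b : ℕ) : mcnt x (a+b) ≤ mcnt x a + mcnt x b + 1 := by
  obtain ⟨i, hi⟩ := mcnt_exists x a
  calc mcnt x (a+b) ≤ cnt x i (a+b) := mcnt_le x i (a+b)
    _ = cnt x i a + cnt x (i+a) b := cnt_add x i a b
    _ ≤ mcnt x a + (mcnt x b + 1) := by
        rw [hi]; exact Nat.add_le_add_left (cnt_le_mcnt hbal (i+a) b) _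
    _ = mcnt x a + mcnt x b + 1 := by ring

lemma mcnt_zero : mcnt x 0 = 0 := by
  obtain ⟨i, hi⟩ := mcnt_exists x 0
  rw [← hi]; simp [cnt, win]

lemma mcnt_mul_le (k n : ℕ) : k * mcnt x n ≤ mcnt x (k*n) := by
  induction k with
  | zero => simp [mcnt_zero]
  | succ k ih =>
    have := mcnt_superadd (x := x) (k*n) n
    calc (k+1) * mcnt x n = k * mcnt x n + mcnt x n := by ring
      _ ≤ mcnt x (k*n) + mcnt x n := Nat.add_le_add_right ih _
      _ ≤ mcnt x (k*n + n) := mcnt_superadd _ _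
      _ = mcnt x ((k+1)*n) := by ring_nf

lemma le_mcnt_mul (hbal : BalancedWord x) (k n : ℕ) : mcnt x (k*n) ≤ k * mcnt x n + k := by
  induction k with
  | zero => simp [mcnt_zero]
  | succ k ih =>
    calc mcnt x ((k+1)*n) = mcnt x (k*n + n) := by ring_nf
      _ ≤ mcnt x (k*n) + mcnt x n + 1 := mcnt_subadd hbal _ _
      _ ≤ (k * mcnt x n + k) + mcnt x n + 1 := by omega
      _ = (k+1) * mcnt x n + (k+1) := by ring

lemma mcnt_cross (hbal : BalancedWord x) (n N : ℕ) : n * mcnt x N ≤ N * mcnt x n + N := by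
  calc n * mcnt x N ≤ mcnt x (n*N) := by have := mcnt_mul_le (x := x) n N; omega
    _ = mcnt x (N*n) := by rw [Nat.mul_comm]
    _ ≤ N * mcnt x n + N := le_mcnt_mul hbal N n

def alphaW (x : ℕ → Fin 2) : ℝ := ⨆ n : ℕ, (mcnt x (n+1) : ℝ) / (n+1)

lemma alpha_bdd (hbal : BalancedWord x) :
    BddAbove (Set.range fun n : ℕ => (mcnt x (n+1) : ℝ) / (n+1)) := by
  refine ⟨(mcnt x 1 : ℝ) + 1, ?_⟩
  rintro r ⟨n, rfl⟩
  have h := le_mcnt_mul hbal (n+1) 1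
  rw [Nat.mul_one] at h
  have hpos : (0:ℝ) < (n+1 : ℝ) := by positivity
  rw [div_le_iff₀ hpos]
  have : (mcnt x (n+1) : ℝ) ≤ (n+1) * (mcnt x 1) + (n+1) := by exact_mod_cast h
  nlinarith

lemma mcnt_le_alpha (hbal : BalancedWord x) (n : ℕ) :
    (mcnt x (n+1) : ℝ) ≤ (n+1 : ℕ) * alphaW x := by
  have h := le_ciSup (alpha_bdd hbal) n
  have hpos : (0:ℝ) < (n:ℝ)+1 := by positivity
  rw [div_le_iff₀ hpos] at h
  calc (mcnt x (n+1) : ℝ) ≤ alphaW x * ((n:ℝ)+1) := h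
    _ = ((n+1:ℕ):ℝ) * alphaW x := by push_cast; ring

lemma alpha_le_mcnt (hbal : BalancedWord x) (n : ℕ) :
    ((n+1 : ℕ) : ℝ) * alphaW x ≤ (mcnt x (n+1) : ℝ) + 1 := by
  have hpos : (0:ℝ) < ((n+1 : ℕ) : ℝ) := by positivity
  rw [mul_comm, ← le_div_iff₀ hpos]
  apply ciSup_le
  intro N
  have hposN : (0:ℝ) < ((N+1 : ℕ) : ℝ) := by positivity
  rw [div_le_div_iff₀ (by positivity) hpos]
  have h := mcnt_cross hbal (n+1) (N+1)
  have h' : (((n+1) * mcnt x (N+1) : ℕ) : ℝ) ≤ (((N+1) * mcnt x (n+1) + (N+1) : ℕ) : ℝ) := by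
    exact_mod_cast h
  push_cast at h' ⊢
  nlinarith

lemma cnt_corridor (hbal : BalancedWord x) (i n : ℕ) :
    |(cnt x i n : ℝ) - n * alphaW x| ≤ 1 := by
  rcases n with _ | m
  · simp [cnt, win]
  · have h1 : (mcnt x (m+1) : ℝ) ≤ (m+1:ℕ) * alphaW x := mcnt_le_alpha hbal m
    have h2 : ((m+1 : ℕ) : ℝ) * alphaW x ≤ (mcnt x (m+1) : ℝ) + 1 := alpha_le_mcnt hbal m
    have h3 : mcnt x (m+1) ≤ cnt x i (m+1) := mcnt_le x i (m+1)
    have h4 : cnt x i (m+1) ≤ mcnt x (m+1) + 1 := cnt_le_mcnt hbal i (m+1)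
    have h3' : (mcnt x (m+1) : ℝ) ≤ (cnt x i (m+1) : ℝ) := by exact_mod_cast h3
    have h4' : (cnt x i (m+1) : ℝ) ≤ (mcnt x (m+1) : ℝ) + 1 := by exact_mod_cast h4
    rw [abs_le]
    push_cast at h1 h2 h3' h4' ⊢
    constructor <;> nlinarith

lemma fin2_eq_of_count (a b : Fin 2) (h : [a].count 1 = [b].count 1) : a = b := by
  revert h; revert a b; decide

lemma fin2_len (u : List (Fin 2)) : u.length = u.count 0 + u.count 1 := by
  induction u with
  | nil => simp
  | cons a t ih =>
    have : a = 0 ∨ a = 1 := by revert a; decide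
    rcases this with rfl | rfl <;> simp [List.count_cons, ih] <;> omega

lemma cnt_one (j : ℕ) : cnt x j 1 = [x j].count 1 := by
  have : win x j 1 = [x j] := by
    rw [win, show List.range 1 = [0] from rfl]
    simp
  rw [cnt, this]

lemma cnt_mul_le (hbal : BalancedWord x) (j m q : ℕ) :
    cnt x j (m*q) ≤ m * (mcnt x q + 1) := by
  induction m generalizing j with
  | zero => simp [cnt, win]
  | succ m ih =>
    have : (m+1)*q = q + m*q := by ring
    rw [this, cnt_add]
    have h1 := cnt_le_mcnt hbal j q
    have h2 := ih (j + q)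
    calc cnt x j q + cnt x (j+q) (m*q) ≤ (mcnt x q + 1) + m * (mcnt x q + 1) := by omega
      _ = (m+1) * (mcnt x q + 1) := by ring

lemma mcnt_mul_ge (hbal : BalancedWord x) (j m q : ℕ) :
    m * mcnt x q ≤ cnt x j (m*q) := le_trans (mcnt_mul_le (x := x) m q) (mcnt_le x j (m*q))

/-- If window counts of length `q` are eventually constant, `x` is eventually periodic. -/
lemma ep_of_cnt_const {q : ℕ} (hq : 1 ≤ q) {N p : ℕ}
    (h : ∀ i, N ≤ i → cnt x i q = p) : EventuallyPeriodic x := by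
  refine ⟨N, q, hq, ?_⟩
  intro i hi
  have e1 : cnt x i (1+q) = cnt x i 1 + cnt x (i+1) q := cnt_add x i 1 q
  have e2 : cnt x i (q+1) = cnt x i q + cnt x (i+q) 1 := cnt_add x i q 1
  have e3 : (1+q) = (q+1) := by omega
  rw [e3] at e1
  have h1 : cnt x i q = p := h i hi
  have h2 : cnt x (i+1) q = p := h (i+1) (by omega)
  have : cnt x (i+q) 1 = cnt x i 1 := by omega
  rw [cnt_one, cnt_one] at this
  exact fin2_eq_of_count _ _ this


lemma mcnt_le_alpha' (hbal : BalancedWord x) {n : ℕ} (hn : 1 ≤ n) :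
    (mcnt x n : ℝ) ≤ (n:ℝ) * alphaW x := by
  obtain ⟨m, rfl⟩ : ∃ m, n = m+1 := ⟨n-1, by omega⟩
  have := mcnt_le_alpha hbal m
  push_cast at this ⊢
  linarith

lemma alpha_le_mcnt' (hbal : BalancedWord x) {n : ℕ} (hn : 1 ≤ n) :
    (n:ℝ) * alphaW x ≤ (mcnt x n : ℝ) + 1 := by
  obtain ⟨m, rfl⟩ : ∃ m, n = m+1 := ⟨n-1, by omega⟩
  have := alpha_le_mcnt hbal m
  push_cast at this ⊢
  linarith

/-- `q·α` is never a natural number, for `q ≥ 1`. -/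
lemma alpha_irrat (hbal : BalancedWord x) (hap : ¬ EventuallyPeriodic x)
    (q : ℕ) (hq : 1 ≤ q) (p : ℕ) : ((p:ℝ) ≠ (q:ℝ) * alphaW x) := by
  intro hpq
  have hqpos : (0:ℝ) < (q:ℝ) := by exact_mod_cast hq
  have hmle : mcnt x q ≤ p := by
    have h := mcnt_le_alpha' hbal hq
    rw [← hpq] at h
    exact_mod_cast h
  have hple : p ≤ mcnt x q + 1 := by
    have h := alpha_le_mcnt' hbal hq
    rw [← hpq] at h
    exact_mod_cast h
  -- bounds on multiples
  have hmul_le : ∀ m : ℕ, 1 ≤ m → mcnt x (m*q) ≤ m * p := by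
    intro m hm
    have h := mcnt_le_alpha' hbal (n := m*q) (Nat.mul_pos (by omega) (by omega))
    have : ((m*q : ℕ) : ℝ) * alphaW x = ((m*p : ℕ) : ℝ) := by
      push_cast
      rw [mul_assoc, ← hpq]
    rw [this] at h
    exact_mod_cast h
  have hmul_ge : ∀ m : ℕ, 1 ≤ m → m * p ≤ mcnt x (m*q) + 1 := by
    intro m hm
    have h := alpha_le_mcnt' hbal (n := m*q) (Nat.mul_pos (by omega) (by omega))
    have : ((m*q : ℕ) : ℝ) * alphaW x = ((m*p : ℕ) : ℝ) := by
      push_cast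
      rw [mul_assoc, ← hpq]
    rw [this] at h
    exact_mod_cast h
  -- at most one "bad" index (count ≠ p) in each residue class mod q
  have claim : ∀ i k, 1 ≤ k → cnt x i q ≠ p → cnt x (i + k*q) q ≠ p → False := by
    intro i k hk hbad1 hbad2
    obtain ⟨k', rfl⟩ : ∃ k', k = k'+1 := ⟨k-1, by omega⟩
    have edec : cnt x i ((k'+2)*q)
        = cnt x i q + (cnt x (i+q) (k'*q) + cnt x (i + (k'+1)*q) q) := by
      have e1 : (k'+2)*q = q + (k'*q + q) := by ring
      rw [e1, cnt_add, cnt_add]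
      have e2 : i + q + k'*q = i + (k'+1)*q := by ring
      rw [e2]
    have hup : cnt x i ((k'+2)*q) ≤ mcnt x ((k'+2)*q) + 1 := cnt_le_mcnt hbal _ _
    have hlo : mcnt x ((k'+2)*q) ≤ cnt x i ((k'+2)*q) := mcnt_le x _ _
    have hmulu := hmul_le (k'+2) (by omega)
    have hmull := hmul_ge (k'+2) (by omega)
    have hmidlo : k' * mcnt x q ≤ cnt x (i+q) (k'*q) := mcnt_mul_ge hbal (i+q) k' q
    have hmidhi : cnt x (i+q) (k'*q) ≤ k' * (mcnt x q + 1) := cnt_mul_le hbal (i+q) k' q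
    have hb1lo : mcnt x q ≤ cnt x i q := mcnt_le x _ _
    have hb1hi : cnt x i q ≤ mcnt x q + 1 := cnt_le_mcnt hbal _ _
    have hb2lo : mcnt x q ≤ cnt x (i + (k'+1)*q) q := mcnt_le x _ _
    have hb2hi : cnt x (i + (k'+1)*q) q ≤ mcnt x q + 1 := cnt_le_mcnt hbal _ _
    -- case split on mcnt x q = p or mcnt x q + 1 = p
    rcases Nat.eq_or_lt_of_le hmle with hcase | hcase
    · -- mcnt x q = p : bad means count = p+1
      have hbb1 : cnt x i q = p + 1 := by omega
      have hbb2 : cnt x (i + (k'+1)*q) q = p + 1 := by omega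
      have : (k'+2)*p + 2 ≤ cnt x i ((k'+2)*q) := by
        rw [edec, hbb1, hbb2]
        have he : k' * p = k' * mcnt x q := by rw [hcase]
        have : k' * p ≤ cnt x (i+q) (k'*q) := by omega
        have e : (k'+2)*p = p + (k'*p + p) := by ring
        omega
      omega
    · -- mcnt x q + 1 = p : bad means count = p - 1 = mcnt x q
      have hc : mcnt x q + 1 = p := by omega
      have hbb1 : cnt x i q = mcnt x q := by omega
      have hbb2 : cnt x (i + (k'+1)*q) q = mcnt x q := by omega
      have he : k' * p = k' * (mcnt x q + 1) := by rw [hc]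
      have hmid : cnt x (i+q) (k'*q) ≤ k' * p := by omega
      have : cnt x i ((k'+2)*q) + 2 ≤ (k'+2)*p := by
        rw [edec, hbb1, hbb2]
        have e : (k'+2)*p = (mcnt x q + 1) + (k'*p + (mcnt x q + 1)) := by rw [hc]; ring
        omega
      omega
  -- bad set is finite
  have hinj : Set.InjOn (· % q) {i | cnt x i q ≠ p} := by
    intro i hi j hj hmod
    rcases Nat.le_total i j with hij | hij
    · obtain ⟨k, rfl⟩ : ∃ k, j = i + k*q := by
        have : q ∣ (j - i) := (Nat.modEq_iff_dvd' hij).mp hmod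
        obtain ⟨k, hk⟩ := this
        exact ⟨k, by rw [Nat.mul_comm]; omega⟩
      rcases Nat.eq_zero_or_pos k with rfl | hk
      · simp
      · exact absurd (claim i k hk hi hj) (by simp)
    · obtain ⟨k, rfl⟩ : ∃ k, i = j + k*q := by
        have : q ∣ (i - j) := (Nat.modEq_iff_dvd' hij).mp hmod.symm
        obtain ⟨k, hk⟩ := this
        exact ⟨k, by rw [Nat.mul_comm]; omega⟩
      rcases Nat.eq_zero_or_pos k with rfl | hk
      · simp
      · exact absurd (claim j k hk hj hi) (by simp)
  have hfin : {i | cnt x i q ≠ p}.Finite := by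
    apply Set.Finite.of_finite_image _ hinj
    exact Set.Finite.subset (Set.finite_Iio q) (by
      rintro _ ⟨i, hi, rfl⟩
      exact Nat.mod_lt _ (by omega))
  obtain ⟨N, hN⟩ := hfin.bddAbove
  apply hap
  apply ep_of_cnt_const (x := x) hq (N := N+1) (p := p)
  intro i hi
  by_contra hbad
  have := hN (Set.mem_setOf.mpr hbad)
  omega

lemma mcnt_lt_alpha (hbal : BalancedWord x) (hap : ¬ EventuallyPeriodic x) {n : ℕ}
    (hn : 1 ≤ n) : (mcnt x n : ℝ) < (n:ℝ) * alphaW x :=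
  lt_of_le_of_ne (mcnt_le_alpha' hbal hn) (alpha_irrat hbal hap n hn (mcnt x n))

lemma alpha_lt_mcnt (hbal : BalancedWord x) (hap : ¬ EventuallyPeriodic x) {n : ℕ}
    (hn : 1 ≤ n) : (n:ℝ) * alphaW x < (mcnt x n : ℝ) + 1 := by
  refine lt_of_le_of_ne (alpha_le_mcnt' hbal hn) fun h => ?_
  exact alpha_irrat hbal hap n hn (mcnt x n + 1) (by push_cast; linarith)

lemma cnt_corridor_strict (hbal : BalancedWord x) (hap : ¬ EventuallyPeriodic x)
    (i n : ℕ) : |(cnt x i n : ℝ) - (n:ℝ) * alphaW x| < 1 := by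
  rcases Nat.eq_zero_or_pos n with rfl | hn
  · simp [cnt, win]
  · have h1 := mcnt_lt_alpha hbal hap hn
    have h2 := alpha_lt_mcnt hbal hap hn
    have h3 : (mcnt x n : ℝ) ≤ (cnt x i n : ℝ) := by exact_mod_cast mcnt_le x i n
    have h4 : (cnt x i n : ℝ) ≤ (mcnt x n : ℝ) + 1 := by exact_mod_cast cnt_le_mcnt hbal i n
    rw [abs_lt]
    constructor <;> nlinarith

/-- prefix count of ones -/
def pc (w : List (Fin 2)) (k : ℕ) : ℕ := (w.take k).count 1

@[simp] lemma pc_zero (w : List (Fin 2)) : pc w 0 = 0 := by simp [pc]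

lemma pc_add_infix (w : List (Fin 2)) (a b : ℕ) (hab : a ≤ b) :
    pc w b = pc w a + ((w.drop a).take (b-a)).count 1 := by
  have h2 : w.take b = w.take a ++ (w.drop a).take (b-a) := by
    conv_lhs => rw [show b = a + (b-a) by omega]
    exact List.take_add
  rw [pc, h2, List.count_append]; rfl

lemma pc_win (i n k : ℕ) (hk : k ≤ n) : pc (win x i n) k = cnt x i k := by
  rw [pc]
  have : n = k + (n - k) := by omega
  rw [this, win_append, List.take_append_of_le_length (by simp),
    List.take_of_length_le (by simp)]
  rfl

/-- the corridor property of a finite word, relative to slope `α` -/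
def IsCorr (α : ℝ) (w : List (Fin 2)) : Prop :=
  ∀ a b, a ≤ b → b ≤ w.length → |((pc w b : ℝ) - (pc w a : ℝ)) - ((b:ℝ) - (a:ℝ)) * α| < 1

lemma isCorr_win (hbal : BalancedWord x) (hap : ¬ EventuallyPeriodic x) (i n : ℕ) :
    IsCorr (alphaW x) (win x i n) := by
  intro a b hab hb
  rw [win_length] at hb
  rw [pc_win i n b hb, pc_win i n a (le_trans hab hb)]
  have hdec : cnt x i b = cnt x i a + cnt x (i+a) (b-a) := by
    conv_lhs => rw [show b = a + (b-a) by omega]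
    rw [cnt_add]
  have := cnt_corridor_strict hbal hap (i+a) (b-a)
  have hcast : ((b - a : ℕ) : ℝ) = (b:ℝ) - (a:ℝ) := by
    push_cast [Nat.cast_sub hab]; ring
  rw [hcast] at this
  have : |((cnt x i b : ℝ) - (cnt x i a : ℝ)) - ((b:ℝ) - (a:ℝ)) * alphaW x| < 1 := by
    have he : (cnt x i b : ℝ) - (cnt x i a : ℝ) = (cnt x (i+a) (b-a) : ℝ) := by
      rw [hdec]; push_cast; ring
    rw [he]; exact this
  exact this

lemma eq_of_pc_eq (u v : List (Fin 2)) (hl : u.length = v.length)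
    (h : ∀ k, pc u k = pc v k) : u = v := by
  apply List.ext_getElem hl
  intro k h1 h2
  have hu : pc u (k+1) = pc u k + [u[k]].count 1 := by
    rw [pc, pc, List.take_succ, List.count_append, List.getElem?_eq_getElem h1]
    rfl
  have hv : pc v (k+1) = pc v k + [v[k]].count 1 := by
    rw [pc, pc, List.take_succ, List.count_append, List.getElem?_eq_getElem h2]
    rfl
  have := h (k+1)
  have h0 := h k
  have : [u[k]].count 1 = [v[k]].count 1 := by omega
  exact fin2_eq_of_count _ _ this

lemma pc_stable (w : List (Fin 2)) (k : ℕ) (h : w.length ≤ k) : pc w k = pc w w.length := by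
  simp [pc, List.take_of_length_le h, List.take_of_length_le (le_refl w.length)]

lemma corr_bound {α : ℝ} {u : List (Fin 2)} (hu : IsCorr α u) {k : ℕ} (hk : k ≤ u.length) :
    |(pc u k : ℝ) - (k:ℝ) * α| < 1 := by
  have := hu 0 k (Nat.zero_le k) hk
  simpa using this

lemma corr_pair {α : ℝ} {u : List (Fin 2)} (hu : IsCorr α u) {k k' : ℕ}
    (hk : k ≤ u.length) (hk' : k' ≤ u.length) :
    ((pc u k : ℝ) - (k:ℝ) * α) - ((pc u k' : ℝ) - (k':ℝ) * α) < 1 := by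
  rcases le_total k k' with h | h
  · have h2 := hu k k' h hk'
    rw [abs_lt] at h2
    have e : ((k':ℝ) - (k:ℝ)) * α = (k':ℝ)*α - (k:ℝ)*α := by ring
    rw [e] at h2
    linarith [h2.1]
  · have h2 := hu k' k h hk
    rw [abs_lt] at h2
    have e : ((k:ℝ) - (k':ℝ)) * α = (k:ℝ)*α - (k':ℝ)*α := by ring
    rw [e] at h2
    linarith [h2.2]

open scoped Classical in
noncomputable def Tcard (α : ℝ) (w : List (Fin 2)) : ℕ :=
  ((Finset.Icc 1 w.length).filter fun k : ℕ => (k:ℝ) * α < (pc w k : ℝ)).card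

lemma Tcard_le (α : ℝ) (w : List (Fin 2)) : Tcard α w ≤ w.length := by
  classical
  refine le_trans (Finset.card_filter_le _ _) ?_
  simp

lemma corr_inj {α : ℝ} (hirr : ∀ k s : ℕ, 1 ≤ k → (s:ℝ) ≠ (k:ℝ) * α)
    {u v : List (Fin 2)} (hu : IsCorr α u) (hv : IsCorr α v)
    (hl : u.length = v.length) (hT : Tcard α u = Tcard α v) : u = v := by
  classical
  set n := u.length with hn
  set Su := (Finset.Icc 1 n).filter (fun k : ℕ => (k:ℝ) * α < (pc u k : ℝ)) with hSu
  set Sv := (Finset.Icc 1 n).filter (fun k : ℕ => (k:ℝ) * α < (pc v k : ℝ)) with hSv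
  have hcard : Su.card = Sv.card := by
    have e1 : Tcard α u = Su.card := by rw [Tcard, hSu]
    have e2 : Tcard α v = Sv.card := by rw [Tcard, hSv, hl]
    rw [← e1, ← e2, hT]
  -- trichotomy
  have tri : ∀ (w : List (Fin 2)), w.length = n → ∀ k ∈ Finset.Icc 1 n,
      ¬ ((k:ℝ) * α < (pc w k : ℝ)) → (pc w k : ℝ) < (k:ℝ) * α := by
    intro w hw k hk hnot
    rcases lt_or_eq_of_le (not_lt.mp hnot) with h | h
    · exact h
    · exact absurd h (hirr k (pc w k) (Finset.mem_Icc.mp hk).1)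
  have hSS : Su = Sv := by
    by_contra hne
    have hA : ¬ Su ⊆ Sv := fun hsub => hne (Finset.eq_of_subset_of_card_le hsub hcard.ge)
    have hB : ¬ Sv ⊆ Su := fun hsub => hne (Finset.eq_of_subset_of_card_le hsub hcard.le).symm
    obtain ⟨k, hkSu, hkSv⟩ := Finset.not_subset.mp hA
    obtain ⟨k', hk'Sv, hk'Su⟩ := Finset.not_subset.mp hB
    rw [hSu, Finset.mem_filter] at hkSu
    rw [hSv, Finset.mem_filter] at hk'Sv
    have hkI := hkSu.1
    have hk'I := hk'Sv.1
    have hknv : (pc v k : ℝ) < (k:ℝ) * α := by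
      apply tri v hl.symm k hkI
      intro hcon
      exact hkSv (by rw [hSv, Finset.mem_filter]; exact ⟨hkI, hcon⟩)
    have hk'nu : (pc u k' : ℝ) < (k':ℝ) * α := by
      apply tri u rfl k' hk'I
      intro hcon
      exact hk'Su (by rw [hSu, Finset.mem_filter]; exact ⟨hk'I, hcon⟩)
    -- integer gaps
    have g1 : pc v k < pc u k := by
      have : (pc v k : ℝ) < (pc u k : ℝ) := by linarith [hkSu.2]
      exact_mod_cast this
    have g2 : pc u k' < pc v k' := by
      have : (pc u k' : ℝ) < (pc v k' : ℝ) := by linarith [hk'Sv.2]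
      exact_mod_cast this
    have g1' : (pc v k : ℝ) + 1 ≤ (pc u k : ℝ) := by exact_mod_cast g1
    have g2' : (pc u k' : ℝ) + 1 ≤ (pc v k' : ℝ) := by exact_mod_cast g2
    have hkn : k ≤ n := (Finset.mem_Icc.mp hkI).2
    have hk'n : k' ≤ n := (Finset.mem_Icc.mp hk'I).2
    have p1 := corr_pair hu (k := k) (k' := k') (by omega) (by omega)
    have p2 := corr_pair hv (k := k') (k' := k) (by rw [← hl]; omega) (by rw [← hl]; omega)
    linarith
  -- prefix counts agree
  have hpc_le : ∀ k, k ≤ n → pc u k = pc v k := by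
    intro k hk
    rcases Nat.eq_zero_or_pos k with rfl | hk1
    · simp
    · have hkI : k ∈ Finset.Icc 1 n := Finset.mem_Icc.mpr ⟨hk1, hk⟩
      have bu := corr_bound hu (k := k) (by omega)
      have bv := corr_bound hv (k := k) (by rw [← hl]; omega)
      rw [abs_lt] at bu bv
      by_cases hmem : k ∈ Su
      · have hmem' : k ∈ Sv := hSS ▸ hmem
        rw [hSu, Finset.mem_filter] at hmem
        rw [hSv, Finset.mem_filter] at hmem'
        have : (pc u k : ℝ) < (pc v k : ℝ) + 1 := by linarith [hmem.2, hmem'.2]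
        have h2 : (pc v k : ℝ) < (pc u k : ℝ) + 1 := by linarith [hmem.2, hmem'.2]
        have n1 : pc u k < pc v k + 1 := by exact_mod_cast this
        have n2 : pc v k < pc u k + 1 := by exact_mod_cast h2
        omega
      · have hmem' : k ∉ Sv := hSS ▸ hmem
        have t1 : (pc u k : ℝ) < (k:ℝ) * α := by
          apply tri u rfl k hkI
          intro hcon
          exact hmem (by rw [hSu, Finset.mem_filter]; exact ⟨hkI, hcon⟩)
        have t2 : (pc v k : ℝ) < (k:ℝ) * α := by
          apply tri v hl.symm k hkI
          intro hcon
          exact hmem' (by rw [hSv, Finset.mem_filter]; exact ⟨hkI, hcon⟩)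
        have : (pc u k : ℝ) < (pc v k : ℝ) + 1 := by linarith [bv.1]
        have h2 : (pc v k : ℝ) < (pc u k : ℝ) + 1 := by linarith [bu.1]
        have n1 : pc u k < pc v k + 1 := by exact_mod_cast this
        have n2 : pc v k < pc u k + 1 := by exact_mod_cast h2
        omega
  have hpc : ∀ k, pc u k = pc v k := by
    intro k
    rcases le_or_gt k n with hk | hk
    · exact hpc_le k hk
    · rw [pc_stable u k (by omega), pc_stable v k (by rw [← hl]; omega), ← hl, ← hn]
      exact hpc_le n le_rfl
  exact eq_of_pc_eq u v hl hpc

lemma win_one (a : ℕ) : win x a 1 = [x a] := by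
  rw [win, show List.range 1 = [0] from rfl]
  simp

lemma win_cons (a n : ℕ) : win x a (n+1) = x a :: win x (a+1) n := by
  rw [show n+1 = 1+n by omega, win_append, win_one]
  rfl

lemma win_take' {A : Type*} (x : ℕ → A) (i n a : ℕ) (h : a ≤ n) :
    (win x i n).take a = win x i a := by
  conv_lhs => rw [show n = a + (n-a) by omega, win_append]
  rw [List.take_append_of_le_length (by simp), List.take_of_length_le (by simp)]

lemma win_drop' {A : Type*} (x : ℕ → A) (i n a : ℕ) (h : a ≤ n) :
    (win x i n).drop a = win x (i+a) (n-a) := by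
  conv_lhs => rw [show n = a + (n-a) by omega, win_append]
  simp [List.drop_append_of_le_length]

lemma win_infix' {A : Type*} (x : ℕ → A) (i n a b : ℕ) (h : a + b ≤ n) :
    ((win x i n).drop a).take b = win x (i+a) b := by
  rw [win_drop' x i n a (by omega), win_take' _ _ _ _ (by omega)]

def factSet (x : ℕ → Fin 2) (n : ℕ) : Set (List (Fin 2)) := Set.range fun i => win x i n

lemma factSet_finite (n : ℕ) : (factSet x n).Finite := by
  apply Set.Finite.subset (Set.finite_range (fun f : Fin n → Fin 2 => List.ofFn f))
  rintro _ ⟨i, rfl⟩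
  refine ⟨fun k => x (i + k), ?_⟩
  apply List.ext_getElem (by simp)
  intro k h1 h2
  simp [win]

noncomputable def factF (x : ℕ → Fin 2) (n : ℕ) : Finset (List (Fin 2)) :=
  (factSet_finite (x := x) n).toFinset

lemma mem_factF {u : List (Fin 2)} {n : ℕ} : u ∈ factF x n ↔ ∃ i, u = win x i n := by
  rw [factF, Set.Finite.mem_toFinset, factSet, Set.mem_range]
  exact ⟨fun ⟨i, h⟩ => ⟨i, h.symm⟩, fun ⟨i, h⟩ => ⟨i, h.symm⟩⟩

lemma factF_image_take (n : ℕ) :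
    (factF x (n+1)).image (fun w => w.take n) = factF x n := by
  ext u
  simp only [Finset.mem_image]
  constructor
  · rintro ⟨w, hw, rfl⟩
    obtain ⟨i, rfl⟩ := mem_factF.mp hw
    exact mem_factF.mpr ⟨i, (win_take' x i (n+1) n (by omega))⟩
  · rintro hu
    obtain ⟨i, rfl⟩ := mem_factF.mp hu
    exact ⟨win x i (n+1), mem_factF.mpr ⟨i, rfl⟩, win_take' x i (n+1) n (by omega)⟩

lemma ep_of_take_inj (n : ℕ)
    (hinj : Set.InjOn (fun w : List (Fin 2) => w.take n) (factF x (n+1))) :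
    EventuallyPeriodic x := by
  classical
  -- pigeonhole : two equal length-n windows
  have hmap : ∀ i ∈ Finset.range ((factF x n).card + 1), win x i n ∈ factF x n :=
    fun i _ => mem_factF.mpr ⟨i, rfl⟩
  obtain ⟨i, _, j, _, hne, heq⟩ :=
    Finset.exists_ne_map_eq_of_card_lt_of_maps_to (by rw [Finset.card_range]; omega) hmap
  wlog hij : i < j generalizing i j
  · exact this j ‹_› i ‹_› hne.symm heq.symm (by omega)
  -- propagate equality of (n+1)-windows
  have prop : ∀ t, win x (i+t) (n+1) = win x (j+t) (n+1) := by
    have step : ∀ a b, win x a n = win x b n → win x a (n+1) = win x b (n+1) := by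
      intro a b hab
      apply hinj (mem_factF.mpr ⟨a, rfl⟩) (mem_factF.mpr ⟨b, rfl⟩)
      simp only
      rw [win_take' x a (n+1) n (by omega), win_take' x b (n+1) n (by omega), hab]
    intro t
    induction t with
    | zero => exact step i j heq
    | succ t ih =>
      have hdrop : win x (i+t+1) n = win x (j+t+1) n := by
        have := congrArg (fun l => l.drop 1) ih
        simpa [win_drop' x (i+t) (n+1) 1 (by omega),
          win_drop' x (j+t) (n+1) 1 (by omega)] using this
      have := step (i+t+1) (j+t+1) hdrop
      rw [show i+(t+1) = i+t+1 by omega, show j+(t+1) = j+t+1 by omega]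
      exact this
  have hlet : ∀ t, x (i+t) = x (j+t) := by
    intro t
    have := prop t
    rw [win_cons, win_cons] at this
    exact (List.cons.injEq _ _ _ _).mp this |>.1
  refine ⟨i, j - i, by omega, fun t ht => ?_⟩
  have e1 : t + (j-i) = j + (t-i) := by omega
  have e2 : t = i + (t-i) := by omega
  rw [e1]
  conv_rhs => rw [e2]
  exact (hlet (t-i)).symm

lemma card_factF (hap : ¬ EventuallyPeriodic x) : ∀ n, n + 1 ≤ (factF x n).card := by
  intro n
  induction n with
  | zero =>
    have : win x 0 0 ∈ factF x 0 := mem_factF.mpr ⟨0, rfl⟩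
    have := Finset.card_pos.mpr ⟨_, this⟩
    omega
  | succ n ih =>
    have hle : (factF x n).card ≤ (factF x (n+1)).card := by
      rw [← factF_image_take (x := x) n]
      exact Finset.card_image_le
    rcases Nat.lt_or_ge (factF x n).card (factF x (n+1)).card with h | h
    · omega
    · exfalso
      apply hap
      apply ep_of_take_inj (x := x) n
      have hcard : ((factF x (n+1)).image (fun w => w.take n)).card = (factF x (n+1)).card := by
        rw [factF_image_take]
        omega
      exact Finset.injOn_of_card_image_eq hcard

lemma isCorr_of_ab (hbal : BalancedWord x) (hap : ¬ EventuallyPeriodic x)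
    {y : ℕ → Fin 2} {u : List (Fin 2)} (hy : InAbClosure x y) (hu : Factor y u) :
    IsCorr (alphaW x) u := by
  obtain ⟨i, hui⟩ := hu
  intro a b hab hb
  have hinfix : (u.drop a).take (b-a) = win y (i+a) (b-a) := by
    rw [hui]
    exact win_infix' y i u.length a (b-a) (by omega)
  obtain ⟨v, hvx, hab2⟩ := hy ((u.drop a).take (b-a)) (by rw [hinfix]; exact factor_win y (i+a) (b-a))
  obtain ⟨i', hvi⟩ := hvx
  have hlen : v.length = b - a := by
    have h0 := hab2 0
    have h1 := hab2 1
    have l1 := fin2_len ((u.drop a).take (b-a))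
    have l2 := fin2_len v
    have l3 : ((u.drop a).take (b-a)).length = b - a := by
      rw [hinfix, win_length]
    omega
  have hcount : ((u.drop a).take (b-a)).count 1 = cnt x i' (b-a) := by
    rw [hab2 1]
    show List.count 1 v = List.count 1 (win x i' (b-a))
    rw [← hlen]
    exact congrArg (List.count 1) hvi
  have hpc : pc u b = pc u a + cnt x i' (b-a) := by
    rw [pc_add_infix u a b hab, hcount]
  have hcor := cnt_corridor_strict hbal hap i' (b-a)
  have hcast : ((b - a : ℕ) : ℝ) = (b:ℝ) - (a:ℝ) := by
    push_cast [Nat.cast_sub hab]; ring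
  rw [hcast] at hcor
  have he : (pc u b : ℝ) - (pc u a : ℝ) = (cnt x i' (b-a) : ℝ) := by
    rw [hpc]; push_cast; ring
  rw [he]
  exact hcor

theorem sturmian_main (hbal : BalancedWord x)
    (hap : ¬ EventuallyPeriodic x) :
    ∀ y, InAbClosure x y ↔ ∀ u, Factor y u → Factor x u := by
  intro y
  constructor
  · intro hy u hu
    classical
    set n := u.length with hn
    by_contra hnot
    have hunF : u ∉ factF x n := by
      intro hmem
      exact hnot (mem_factF.mp hmem)
    have hirr : ∀ k s : ℕ, 1 ≤ k → (s:ℝ) ≠ (k:ℝ) * alphaW x :=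
      fun k s hk => alpha_irrat hbal hap k hk s
    set G : Finset (List (Fin 2)) := insert u (factF x n) with hG
    have hGcard : (factF x n).card + 1 = G.card := by
      rw [hG, Finset.card_insert_of_notMem hunF]
    have hmaps : ∀ w ∈ G, Tcard (alphaW x) w ∈ Finset.range (n+1) := by
      intro w hw
      rw [Finset.mem_range]
      have hwlen : w.length = n := by
        rw [hG, Finset.mem_insert] at hw
        rcases hw with rfl | hw
        · rfl
        · obtain ⟨i, rfl⟩ := mem_factF.mp hw
          simp
      have := Tcard_le (alphaW x) w
      omega
    have hinjG : Set.InjOn (Tcard (alphaW x)) G := by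
      intro w1 hw1 w2 hw2 hT
      have hprop : ∀ w ∈ G, IsCorr (alphaW x) w ∧ w.length = n := by
        intro w hw
        rw [hG, Finset.mem_insert] at hw
        rcases hw with rfl | hw
        · exact ⟨isCorr_of_ab hbal hap hy hu, rfl⟩
        · obtain ⟨i, rfl⟩ := mem_factF.mp hw
          exact ⟨isCorr_win hbal hap i n, by simp⟩
      obtain ⟨hc1, hl1⟩ := hprop w1 hw1
      obtain ⟨hc2, hl2⟩ := hprop w2 hw2
      exact corr_inj hirr hc1 hc2 (by rw [hl1, hl2]) hT
    have hle := Finset.card_le_card_of_injOn _ hmaps hinjG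
    rw [Finset.card_range] at hle
    have := card_factF hap n
    omega
  · intro h u hu
    exact ⟨u, h u hu, fun a => rfl⟩


theorem sturmian_abClosure_eq_orbitClosure (x : ℕ → Fin 2)
    (hbal : BalancedWord x) (hur : UniformlyRecurrent x)
    (hap : ¬ EventuallyPeriodic x) :
    ∀ y, InAbClosure x y ↔ ∀ u, Factor y u → Factor x u := by
  exact sturmian_main hbal hap
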